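/- arXiv:2107.01410 — 2 statements merged into one kernel-verified Lean document; each statement's English description precedes it below -/
import Mathlib

section
/- Let G = (V, E) be a connected simple graph with at least two vertices, and let U be a maximal independent set of G with |U| ≥ 2. Then for every vertex i ∈ U there exists a vertex j ∈ U, j ≠ i, such that the geodesic distance d_G(i, j) satisfies 2 ≤ d_G(i, j) ≤ 3. -/
theorem stmt2 {V : Type*} [Fintype V] (G : SimpleGraph V)
    (hconn : G.Connected) (hcard : 2 ≤ Fintype.card V)
    (U : Set V)
    (hindep : U.Pairwise fun i j => ¬ G.Adj i j)
    (hmaximal : ∀ W : Set V, (W.Pairwise fun i j => ¬ G.Adj i j) → U ⊆ W → W = U)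
    (hU2 : 2 ≤ U.ncard) :
    ∀ i ∈ U, ∃ j ∈ U, j ≠ i ∧ 2 ≤ G.dist i j ∧ G.dist i j ≤ 3 := by
  intro i hi
  -- any element of U distinct from i is at distance ≥ 2
  have hge2 : ∀ j ∈ U, j ≠ i → 2 ≤ G.dist i j := by
    intro j hj hji
    have h1 : 0 < G.dist i j := hconn.pos_dist_of_ne (Ne.symm hji)
    have h2 : G.dist i j ≠ 1 := fun h =>
      hindep hi hj (Ne.symm hji) (SimpleGraph.dist_eq_one_iff_adj.mp h)
    omega
  obtain ⟨j, hj, hji⟩ := Set.exists_ne_of_one_lt_ncard (show 1 < U.ncard by omega) i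
  by_cases hle : G.dist i j ≤ 3
  · exact ⟨j, hj, hji, hge2 j hj hji, hle⟩
  · push_neg at hle
    obtain ⟨p, hp⟩ := hconn.exists_walk_length_eq_dist i j
    match p, hp with
    | .nil, hp => simp at hle
    | .cons h1 .nil, hp => simp at hp; omega
    | .cons (v := v1) h1 (.cons (v := v2) h2 r), hp =>
      simp only [SimpleGraph.Walk.length_cons] at hp
      have hrle : G.dist v2 j ≤ r.length := SimpleGraph.dist_le r
      -- i ≠ v2
      have hne2 : i ≠ v2 := by
        rintro rfl
        have := SimpleGraph.dist_le r
        omega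
      -- ¬ Adj i v2
      have hna2 : ¬ G.Adj i v2 := by
        intro ha
        have := SimpleGraph.dist_le (SimpleGraph.Walk.cons ha r)
        simp only [SimpleGraph.Walk.length_cons] at this
        omega
      have hd2 : G.dist i v2 ≤ 2 := by
        have := SimpleGraph.dist_le
          (SimpleGraph.Walk.cons h1 (SimpleGraph.Walk.cons h2 SimpleGraph.Walk.nil))
        simpa using this
      by_cases hv2 : v2 ∈ U
      · exact ⟨v2, hv2, Ne.symm hne2, hge2 v2 hv2 (Ne.symm hne2), by omega⟩
      · -- v2 is adjacent to some u ∈ U by maximality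
        have hsym : Symmetric fun i j => ¬ G.Adj i j := fun a b h ha => h ha.symm
        by_cases hadj : ∃ u ∈ U, G.Adj v2 u
        · obtain ⟨u, hu, hadju⟩ := hadj
          have hui : u ≠ i := by rintro rfl; exact hna2 hadju.symm
          have hle3 : G.dist i u ≤ 3 := by
            calc G.dist i u ≤ G.dist i v2 + G.dist v2 u := hconn.dist_triangle
              _ ≤ 2 + 1 := by
                  gcongr
                  exact SimpleGraph.dist_eq_one_iff_adj.mpr hadju |>.le
              _ = 3 := rfl
          exact ⟨u, hu, hui, hge2 u hu hui, hle3⟩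
        · push_neg at hadj
          exfalso
          have hins : (insert v2 U).Pairwise fun i j => ¬ G.Adj i j :=
            by
              haveI : Std.Symm (fun i j : V => ¬ G.Adj i j) := ⟨fun a b h => hsym h⟩
              exact Set.pairwise_insert_of_symm.mpr
                ⟨hindep, fun b hb _ => hadj b hb⟩
          have := hmaximal (insert v2 U) hins (Set.subset_insert _ _)
          exact hv2 (this ▸ Set.mem_insert v2 U)
end

section
/- Let G = (V, E) be a connected simple graph and U a maximal independent set of G. Define a graph H on vertex set U by joining u, v ∈ U whenever 1 ≤ d_G(u, v) ≤ 3. Then H is connected. -/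
/-- The graph on a vertex subset `U` joining `u ≠ v` whenever their geodesic
distance in `G` is at most `3`. -/
def poolGraph {V : Type*} (G : SimpleGraph V) (U : Set V) : SimpleGraph U where
  Adj u v := u ≠ v ∧ G.dist (u : V) (v : V) ≤ 3
  symm := by
    constructor
    intro u v h
    exact ⟨h.1.symm, by rw [SimpleGraph.dist_comm]; exact h.2⟩
  loopless := by
    constructor
    intro u h
    exact h.1 rfl
private lemma step_lemma {V : Type*} {G : SimpleGraph V} (hconn : G.Connected) {u v : V} {d : ℕ}
    (hd : G.dist u v = d + 1) : ∃ b, G.Adj u b ∧ G.dist b v ≤ d := by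
  obtain ⟨p, hp⟩ := hconn.exists_walk_length_eq_dist u v
  rw [hd] at hp
  cases p with
  | nil => simp at hp
  | cons h q =>
    refine ⟨_, h, ?_⟩
    have := SimpleGraph.dist_le q
    simp [SimpleGraph.Walk.length_cons] at hp
    omega

theorem stmt4 {V : Type*} [Fintype V] [Nonempty V] (G : SimpleGraph V)
    (hconn : G.Connected)
    (U : Set V)
    (hindep : U.Pairwise fun i j => ¬ G.Adj i j)
    (hmaximal : ∀ W : Set V, (W.Pairwise fun i j => ¬ G.Adj i j) → U ⊆ W → W = U) :
    (poolGraph G U).Connected := by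
  -- domination
  have hdom : ∀ x : V, ∃ w ∈ U, G.dist x w ≤ 1 := by
    intro x
    by_cases hx : x ∈ U
    · exact ⟨x, hx, by rw [SimpleGraph.dist_self]; omega⟩
    by_cases hadj : ∃ w ∈ U, G.Adj x w
    · obtain ⟨w, hw, ha⟩ := hadj
      exact ⟨w, hw, by rw [← SimpleGraph.dist_eq_one_iff_adj] at ha; omega⟩
    push_neg at hadj
    exfalso
    have hW : (insert x U).Pairwise fun i j => ¬ G.Adj i j := by
      refine Set.pairwise_insert.mpr ⟨hindep, ?_⟩
      intro w hw _
      exact ⟨fun h => hadj w hw h, fun h => hadj w hw h.symm⟩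
    have := hmaximal _ hW (Set.subset_insert x U)
    exact hx (this ▸ Set.mem_insert x U)
  -- nonempty U
  have hUne : U.Nonempty := by
    by_contra h
    rw [Set.not_nonempty_iff_eq_empty] at h
    obtain ⟨v⟩ := ‹Nonempty V›
    have := hmaximal {v} (Set.pairwise_singleton v _) (h ▸ Set.empty_subset _)
    simp [h] at this
  haveI : Nonempty U := hUne.to_subtype
  rw [SimpleGraph.connected_iff]
  refine ⟨?_, inferInstance⟩
  -- key: reachability by strong induction on distance bound
  have key : ∀ n : ℕ, ∀ u v : U, G.dist (u : V) (v : V) ≤ n → (poolGraph G U).Reachable u v := by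
    intro n
    induction n using Nat.strong_induction_on with
    | _ n IH =>
      intro u v hle
      by_cases h3 : G.dist (u : V) (v : V) ≤ 3
      · by_cases huv : u = v
        · exact huv ▸ SimpleGraph.Reachable.refl u
        · exact (SimpleGraph.Adj.reachable ⟨huv, h3⟩)
      push_neg at h3
      set d := G.dist (u : V) (v : V) with hd
      obtain ⟨b, hab, hbd⟩ := step_lemma hconn (show G.dist (u:V) (v:V) = (d-1) + 1 by omega)
      have hbd' : G.dist b (v : V) = d - 1 := by
        have := hconn.dist_triangle (u := (u:V)) (v := b) (w := (v:V))
        have h1 : G.dist (u:V) b = 1 := SimpleGraph.dist_eq_one_iff_adj.mpr hab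
        omega
      obtain ⟨c, hbc, hcd⟩ := step_lemma hconn (show G.dist b (v:V) = (d-2) + 1 by omega)
      obtain ⟨w, hwU, hw⟩ := hdom c
      have hudc : G.dist (u : V) w ≤ 3 := by
        have t1 := hconn.dist_triangle (u := (u:V)) (v := b) (w := w)
        have t2 := hconn.dist_triangle (u := b) (v := c) (w := w)
        have h1 : G.dist (u:V) b = 1 := SimpleGraph.dist_eq_one_iff_adj.mpr hab
        have h2 : G.dist b c = 1 := SimpleGraph.dist_eq_one_iff_adj.mpr hbc
        omega
      have hwvd : G.dist w (v : V) ≤ d - 1 := by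
        have t := hconn.dist_triangle (u := w) (v := c) (w := (v:V))
        have : G.dist w c ≤ 1 := by rw [SimpleGraph.dist_comm]; exact hw
        omega
      have hrec : (poolGraph G U).Reachable ⟨w, hwU⟩ v :=
        IH (n - 1) (by omega) ⟨w, hwU⟩ v (by simpa using (show G.dist w (v:V) ≤ n - 1 by omega))
      by_cases huw : u = (⟨w, hwU⟩ : U)
      · exact huw ▸ hrec
      · exact (SimpleGraph.Adj.reachable (⟨huw, hudc⟩ : (poolGraph G U).Adj u ⟨w, hwU⟩)).trans hrec
  intro u v
  exact key (G.dist (u : V) (v : V)) u v le_rfl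
end
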